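/- Let K be a finite field of characteristic different from 2, K̄ an algebraic closure of K, and n ≥ 2 an even integer. Then the centraliser of Sp_n(K) in GSp_n(K̄) is exactly the group of scalar matrices {λ·Id_n : λ ∈ K̄^×}: a matrix A ∈ GSp_n(K̄) satisfies A B A⁻¹ = B for all B ∈ Sp_n(K) if and only if A = λ·Id_n for some λ ∈ K̄^×. -/

import Mathlib

open Matrix

noncomputable section

/-- The Gram matrix of the standard symplectic form on `R^n` (for `n` even):
block form `[[0, I], [-I, 0]]`. -/
def stdJ (n : ℕ) (R : Type*) [CommRing R] : Matrix (Fin n) (Fin n) R :=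
  Matrix.of fun i j =>
    if i.val + n / 2 = j.val then 1 else if j.val + n / 2 = i.val then -1 else 0

/-- Membership in the general symplectic group `GSp_n(R)`. -/
def IsGSp (n : ℕ) (R : Type*) [CommRing R] (M : Matrix (Fin n) (Fin n) R) : Prop :=
  IsUnit M ∧ ∃ α : Rˣ, Mᵀ * stdJ n R * M = (α : R) • stdJ n R

/-- Membership in the symplectic group `Sp_n(R)`. -/
def IsSp (n : ℕ) (R : Type*) [CommRing R] (M : Matrix (Fin n) (Fin n) R) : Prop :=
  IsUnit M ∧ Mᵀ * stdJ n R * M = stdJ n R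

namespace CentraliserAux

/-- The reindexing equivalence. -/
abbrev ee (m : ℕ) : Fin m ⊕ Fin m ≃ Fin (m + m) := finSumFinEquiv

lemma stdJ_submatrix (m : ℕ) (R : Type*) [CommRing R] :
    (stdJ (m + m) R).submatrix (ee m) (ee m) =
      Matrix.fromBlocks 0 1 (-1) 0 := by
  have h2 : (m + m) / 2 = m := by omega
  ext p q
  cases p with
  | inl a =>
    cases q with
    | inl b =>
      have hb := b.isLt
      simp only [Matrix.submatrix_apply, stdJ, Matrix.of_apply, ee, finSumFinEquiv_apply_left,
        Fin.coe_castAdd, h2, Matrix.fromBlocks_apply₁₁, Matrix.zero_apply]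
      rw [if_neg (by omega), if_neg (by omega)]
    | inr b =>
      have ha := a.isLt; have hb := b.isLt
      simp only [Matrix.submatrix_apply, stdJ, Matrix.of_apply, ee, finSumFinEquiv_apply_left,
        finSumFinEquiv_apply_right, Fin.coe_castAdd, Fin.coe_natAdd, h2,
        Matrix.fromBlocks_apply₁₂]
      rcases eq_or_ne a b with rfl | hab
      · rw [Matrix.one_apply_eq, if_pos (by omega)]
      · rw [Matrix.one_apply_ne hab, if_neg (fun hcon => hab (Fin.ext (by omega))),
          if_neg (by omega)]
  | inr a =>
    cases q with
    | inl b =>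
      have ha := a.isLt; have hb := b.isLt
      simp only [Matrix.submatrix_apply, stdJ, Matrix.of_apply, ee, finSumFinEquiv_apply_left,
        finSumFinEquiv_apply_right, Fin.coe_castAdd, Fin.coe_natAdd, h2,
        Matrix.fromBlocks_apply₂₁, Matrix.neg_apply]
      rcases eq_or_ne a b with rfl | hab
      · rw [if_neg (by omega), if_pos (by omega), Matrix.one_apply_eq]
      · rw [if_neg (by omega), if_neg (fun hcon => hab (Fin.ext (by omega))),
          Matrix.one_apply_ne hab, neg_zero]
    | inr b =>
      have ha := a.isLt; have hb := b.isLt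
      simp only [Matrix.submatrix_apply, stdJ, Matrix.of_apply, ee,
        finSumFinEquiv_apply_right, Fin.coe_natAdd, h2,
        Matrix.fromBlocks_apply₂₂, Matrix.zero_apply]
      rw [if_neg (by omega), if_neg (by omega)]

lemma stdJ_eq (m : ℕ) (R : Type*) [CommRing R] :
    stdJ (m + m) R =
      Matrix.reindex (ee m) (ee m) (Matrix.fromBlocks 0 1 (-1) 0) := by
  rw [← stdJ_submatrix m R]
  ext i j
  simp [Matrix.reindex_apply]

lemma reindex_mul {α β R : Type*} [CommRing R] [Fintype α] [Fintype β]
    [DecidableEq α] [DecidableEq β] (eq : α ≃ β) (M N : Matrix α α R) :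
    Matrix.reindex eq eq M * Matrix.reindex eq eq N = Matrix.reindex eq eq (M * N) := by
  simp only [Matrix.reindex_apply]
  rw [Matrix.submatrix_mul_equiv]

lemma reindex_one {α β R : Type*} [CommRing R] [Fintype α] [Fintype β]
    [DecidableEq α] [DecidableEq β] (eq : α ≃ β) :
    Matrix.reindex eq eq (1 : Matrix α α R) = 1 := by
  simp [Matrix.reindex_apply, Matrix.submatrix_one_equiv]

lemma reindex_transpose {α β R : Type*} [CommRing R] (eq : α ≃ β) (M : Matrix α α R) :
    (Matrix.reindex eq eq M)ᵀ = Matrix.reindex eq eq Mᵀ := by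
  simp [Matrix.reindex_apply, Matrix.transpose_submatrix]

lemma isSp_upper {m : ℕ} {R : Type*} [CommRing R]
    (S : Matrix (Fin m) (Fin m) R) (hS : Sᵀ = S) :
    IsSp (m + m) R (Matrix.reindex (ee m) (ee m) (Matrix.fromBlocks 1 S 0 1)) := by
  constructor
  · have hmul : Matrix.reindex (ee m) (ee m) (Matrix.fromBlocks 1 S 0 1)
        * Matrix.reindex (ee m) (ee m) (Matrix.fromBlocks 1 (-S) 0 1) = 1 := by
      rw [reindex_mul, ← reindex_one (ee m) (R := R)]
      refine congrArg _ ?_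
      rw [Matrix.fromBlocks_multiply, ← Matrix.fromBlocks_one]
      congr 1 <;> simp
    haveI := invertibleOfRightInverse (h := hmul)
    exact isUnit_of_invertible _
  · rw [stdJ_eq, reindex_transpose, reindex_mul, reindex_mul]
    refine congrArg _ ?_
    rw [Matrix.fromBlocks_transpose, Matrix.fromBlocks_multiply, Matrix.fromBlocks_multiply]
    congr 1 <;> simp [hS]

lemma isSp_lower {m : ℕ} {R : Type*} [CommRing R]
    (S : Matrix (Fin m) (Fin m) R) (hS : Sᵀ = S) :
    IsSp (m + m) R (Matrix.reindex (ee m) (ee m) (Matrix.fromBlocks 1 0 S 1)) := by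
  constructor
  · have hmul : Matrix.reindex (ee m) (ee m) (Matrix.fromBlocks 1 0 S 1)
        * Matrix.reindex (ee m) (ee m) (Matrix.fromBlocks 1 0 (-S) 1) = 1 := by
      rw [reindex_mul, ← reindex_one (ee m) (R := R)]
      refine congrArg _ ?_
      rw [Matrix.fromBlocks_multiply, ← Matrix.fromBlocks_one]
      congr 1 <;> simp
    haveI := invertibleOfRightInverse (h := hmul)
    exact isUnit_of_invertible _
  · rw [stdJ_eq, reindex_transpose, reindex_mul, reindex_mul]
    refine congrArg _ ?_
    rw [Matrix.fromBlocks_transpose, Matrix.fromBlocks_multiply, Matrix.fromBlocks_multiply]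
    congr 1 <;> simp [hS]

/-- A matrix commuting with all `E_ii` and `E_ij + E_ji` is scalar. -/
lemma eq_smul_one_of_commutes {m : ℕ} (hm : 0 < m) {F : Type*} [Field F]
    (a : Matrix (Fin m) (Fin m) F)
    (h1 : ∀ i, a * Matrix.single i i 1 = Matrix.single i i 1 * a)
    (h2 : ∀ i j, a * (Matrix.single i j 1 + Matrix.single j i 1)
        = (Matrix.single i j 1 + Matrix.single j i 1) * a) :
    a = a ⟨0, hm⟩ ⟨0, hm⟩ • 1 := by
  have hdiag : ∀ p q : Fin m, p ≠ q → a p q = 0 := by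
    intro p q hpq
    have := congrFun (congrFun (h1 q) p) q
    simpa [hpq] using this
  have hsame : ∀ i : Fin m, a i i = a ⟨0, hm⟩ ⟨0, hm⟩ := by
    intro i
    by_cases hi : i = ⟨0, hm⟩
    · rw [hi]
    · have := congrFun (congrFun (h2 ⟨0, hm⟩ i) ⟨0, hm⟩) i
      simp [Matrix.mul_add, Matrix.add_mul, hi, Ne.symm hi] at this
      exact this.symm
  ext p q
  by_cases hpq : p = q
  · subst hpq
    simp [Matrix.one_apply, hsame p]
  · simp [Matrix.one_apply, hpq, hdiag p q hpq]

end CentraliserAux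

open CentraliserAux in
/-- The centraliser of `Sp_n(K)` in `GSp_n(K̄)` consists exactly of the scalar
matrices `λ · Id` with `λ ∈ K̄^×`. -/
theorem centraliser_of_Sp_eq_scalars
    {K : Type*} [Field K] [Fintype K] (hchar : ringChar K ≠ 2)
    {n : ℕ} (hn2 : 2 ≤ n) (hneven : Even n)
    (A : Matrix (Fin n) (Fin n) (AlgebraicClosure K))
    (hA : IsGSp n (AlgebraicClosure K) A) :
    (∀ B : Matrix (Fin n) (Fin n) K, IsSp n K B →
        A * B.map (algebraMap K (AlgebraicClosure K)) * A⁻¹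
          = B.map (algebraMap K (AlgebraicClosure K)))
      ↔ ∃ lam : (AlgebraicClosure K)ˣ,
          A = (lam : AlgebraicClosure K) • (1 : Matrix (Fin n) (Fin n) (AlgebraicClosure K)) := by
  have hdet : IsUnit A.det := (Matrix.isUnit_iff_isUnit_det A).mp hA.1
  constructor
  · -- hard direction
    intro h
    obtain ⟨m, rfl⟩ := hneven
    have hm : 0 < m := by omega
    set φ := algebraMap K (AlgebraicClosure K) with hφ
    -- A commutes with the image of Sp
    have hcomm : ∀ B : Matrix (Fin (m + m)) (Fin (m + m)) K, IsSp (m + m) K B →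
        A * B.map φ = B.map φ * A := by
      intro B hB
      have h1 := h B hB
      calc A * B.map φ = A * B.map φ * (A⁻¹ * A) := by
            rw [Matrix.nonsing_inv_mul A hdet, mul_one]
        _ = (A * B.map φ * A⁻¹) * A := by rw [mul_assoc, mul_assoc, mul_assoc]
        _ = B.map φ * A := by rw [h1]
    -- transfer to block form
    set A' : Matrix (Fin m ⊕ Fin m) (Fin m ⊕ Fin m) (AlgebraicClosure K) :=
      (Matrix.reindex (ee m) (ee m)).symm A with hA'def
    have hAA : A = Matrix.reindex (ee m) (ee m) A' :=
      ((Matrix.reindex (ee m) (ee m)).apply_symm_apply A).symm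
    have hmapre : ∀ (M : Matrix (Fin m ⊕ Fin m) (Fin m ⊕ Fin m) K),
        (Matrix.reindex (ee m) (ee m) M).map φ
          = Matrix.reindex (ee m) (ee m) (M.map φ) := by
      intro M
      simp [Matrix.reindex_apply, Matrix.submatrix_map]
    have hcupper : ∀ T : Matrix (Fin m) (Fin m) K, Tᵀ = T →
        A' * Matrix.fromBlocks 1 (T.map φ) 0 1
          = Matrix.fromBlocks 1 (T.map φ) 0 1 * A' := by
      intro T hT
      have hsp := isSp_upper (R := K) T hT
      have hcm := hcomm _ hsp
      rw [hAA, hmapre, reindex_mul, reindex_mul] at hcm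
      have hcm2 := (Matrix.reindex (ee m) (ee m)).injective hcm
      rw [Matrix.fromBlocks_map] at hcm2
      simpa [Matrix.map_one φ (map_zero φ) (map_one φ), Matrix.map_zero] using hcm2
    have hclower : ∀ T : Matrix (Fin m) (Fin m) K, Tᵀ = T →
        A' * Matrix.fromBlocks 1 0 (T.map φ) 1
          = Matrix.fromBlocks 1 0 (T.map φ) 1 * A' := by
      intro T hT
      have hsp := isSp_lower (R := K) T hT
      have hcm := hcomm _ hsp
      rw [hAA, hmapre, reindex_mul, reindex_mul] at hcm
      have hcm2 := (Matrix.reindex (ee m) (ee m)).injective hcm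
      rw [Matrix.fromBlocks_map] at hcm2
      simpa [Matrix.map_one φ (map_zero φ) (map_one φ), Matrix.map_zero] using hcm2
    -- block decomposition of A'
    set a := A'.toBlocks₁₁ with ha
    set b := A'.toBlocks₁₂ with hb
    set c := A'.toBlocks₂₁ with hc
    set d := A'.toBlocks₂₂ with hd
    have hblocks : A' = Matrix.fromBlocks a b c d := (Matrix.fromBlocks_toBlocks A').symm
    have hup : ∀ T : Matrix (Fin m) (Fin m) K, Tᵀ = T →
        T.map φ * c = 0 ∧ a * T.map φ + b = b + T.map φ * d := by
      intro T hT
      have hq := hcupper T hT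
      rw [hblocks, Matrix.fromBlocks_multiply, Matrix.fromBlocks_multiply,
        Matrix.fromBlocks_inj] at hq
      obtain ⟨e1, e2, e3, e4⟩ := hq
      simp only [Matrix.mul_one, Matrix.one_mul, Matrix.mul_zero, Matrix.zero_mul,
        add_zero, zero_add] at e1 e2
      exact ⟨left_eq_add.mp e1, e2⟩
    have hlow : ∀ T : Matrix (Fin m) (Fin m) K, Tᵀ = T → b * T.map φ = 0 := by
      intro T hT
      have hq := hclower T hT
      rw [hblocks, Matrix.fromBlocks_multiply, Matrix.fromBlocks_multiply,
        Matrix.fromBlocks_inj] at hq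
      obtain ⟨e1, e2, e3, e4⟩ := hq
      simp only [Matrix.mul_one, Matrix.one_mul, Matrix.mul_zero, Matrix.zero_mul,
        add_zero, zero_add] at e1
      exact add_eq_left.mp e1
    have hT1 : ((1 : Matrix (Fin m) (Fin m) K)).map φ = 1 :=
      Matrix.map_one φ (map_zero φ) (map_one φ)
    have hc0 : c = 0 := by
      have := (hup 1 Matrix.transpose_one).1
      rwa [hT1, Matrix.one_mul] at this
    have hb0 : b = 0 := by
      have := hlow 1 Matrix.transpose_one
      rwa [hT1, Matrix.mul_one] at this
    have had : a = d := by
      have := (hup 1 Matrix.transpose_one).2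
      rw [hT1, Matrix.one_mul, Matrix.mul_one, add_comm b d] at this
      exact add_right_cancel this
    have hacomm : ∀ T : Matrix (Fin m) (Fin m) K, Tᵀ = T →
        a * T.map φ = T.map φ * a := by
      intro T hT
      have := (hup T hT).2
      rw [← had, add_comm b (T.map φ * a)] at this
      exact add_right_cancel this
    have hmapE : ∀ i j : Fin m, (Matrix.single i j (1 : K)).map φ
        = Matrix.single i j 1 := by
      intro i j
      ext p q
      simp [Matrix.single, Matrix.map_apply, apply_ite φ]
    have hEsymm : ∀ i : Fin m, (Matrix.single i i (1 : K))ᵀ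
        = Matrix.single i i 1 := by
      intro i
      ext p q
      simp [Matrix.transpose_apply, Matrix.single, and_comm]
    have hEt : ∀ (i j : Fin m) (x : K), (Matrix.single i j x)ᵀ
        = Matrix.single j i x := by
      intro i j x
      ext p q
      simp [Matrix.transpose_apply, Matrix.single, and_comm]
    have hEsymm2 : ∀ i j : Fin m,
        (Matrix.single i j (1 : K) + Matrix.single j i 1)ᵀ
        = Matrix.single i j 1 + Matrix.single j i 1 := by
      intro i j
      rw [Matrix.transpose_add, hEt, hEt, add_comm]
    have haE : a = a ⟨0, hm⟩ ⟨0, hm⟩ • 1 := by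
      apply eq_smul_one_of_commutes hm
      · intro i
        have := hacomm (Matrix.single i i 1) (hEsymm i)
        rwa [hmapE] at this
      · intro i j
        have := hacomm (Matrix.single i j 1 + Matrix.single j i 1) (hEsymm2 i j)
        have hmE : (Matrix.single i j (1 : K) + Matrix.single j i 1).map φ
            = Matrix.single i j 1 + Matrix.single j i 1 := by
          rw [Matrix.map_add (⇑φ) (fun a₁ a₂ => RingHom.map_add φ a₁ a₂), hmapE, hmapE]
        rwa [hmE] at this
    set lam0 : AlgebraicClosure K := a ⟨0, hm⟩ ⟨0, hm⟩ with hlam0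
    have hA'scalar : A' = lam0 • 1 := by
      rw [hblocks, hb0, hc0, ← had, haE, ← Matrix.fromBlocks_one, Matrix.fromBlocks_smul,
        smul_zero]
    have hAfinal : A = lam0 • 1 := by
      rw [hAA, hA'scalar]
      ext i j
      simp [Matrix.reindex_apply, Matrix.submatrix_apply, Matrix.smul_apply, Matrix.one_apply,
        EmbeddingLike.apply_eq_iff_eq]
    have hlamne : lam0 ≠ 0 := by
      intro h0
      rw [hAfinal, h0, zero_smul] at hdet
      rw [@Matrix.det_zero _ _ _ _ _ ⟨(⟨0, by omega⟩ : Fin (m + m))⟩] at hdet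
      exact hdet.ne_zero rfl
    exact ⟨Units.mk0 lam0 hlamne, hAfinal⟩
  · -- easy direction
    rintro ⟨lam, rfl⟩
    intro B hB
    set φ := algebraMap K (AlgebraicClosure K) with hφ
    have hcb : ((lam : AlgebraicClosure K) • (1 : Matrix (Fin n) (Fin n) (AlgebraicClosure K)))
          * B.map φ
        = B.map φ
          * ((lam : AlgebraicClosure K) • (1 : Matrix (Fin n) (Fin n) (AlgebraicClosure K))) := by
      simp [Matrix.smul_mul, Matrix.mul_smul]
    rw [hcb, mul_assoc, Matrix.mul_nonsing_inv _ hdet, mul_one]
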